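/- Every positive integer x has a representation x = Σ_{i∈S} g_i^(k) where S is a finite set of indices containing no k consecutive integers (a k-Zeckendorf representation), for the k-bonacci sequence with initial values 2^i. -/

import Mathlib

private lemma sum_two_pow_lt : ∀ m : ℕ, ∑ i ∈ Finset.range m, 2^i < 2^m := by
  intro m
  induction m with
  | zero => simp
  | succ m ih => rw [Finset.sum_range_succ, pow_succ]; omega

section
variable (k : ℕ) (hk : 2 ≤ k) (g : ℕ → ℕ)
  (hinit : ∀ i, i < k → g i = 2 ^ i)
  (hrec : ∀ n, k ≤ n → g n = ∑ j ∈ Finset.Icc 1 k, g (n - j))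

include hk hinit hrec

private lemma aux_pos : ∀ n, 0 < g n := by
  intro n
  induction n using Nat.strong_induction_on with
  | _ n ih =>
    rcases lt_or_ge n k with h | h
    · rw [hinit n h]; positivity
    · rw [hrec n h]
      have h1 : (1:ℕ) ∈ Finset.Icc 1 k := by simp; omega
      have h2 : g (n - 1) ≤ ∑ j ∈ Finset.Icc 1 k, g (n - j) :=
        Finset.single_le_sum (f := fun j => g (n - j)) (fun i _ => Nat.zero_le _) h1
      have hp := ih (n-1) (by omega)
      omega

private lemma aux_mono : StrictMono g := by
  apply strictMono_nat_of_lt_succ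
  intro n
  rcases lt_or_ge (n+1) k with h | h
  · rw [hinit n (by omega), hinit (n+1) h, pow_succ]
    have : 0 < 2^n := by positivity
    omega
  · rw [hrec (n+1) h]
    have hsub : ({1,2} : Finset ℕ) ⊆ Finset.Icc 1 k := by
      intro j hj; simp at hj ⊢; omega
    have hle : ∑ j ∈ ({1,2} : Finset ℕ), g (n+1-j) ≤ ∑ j ∈ Finset.Icc 1 k, g (n+1-j) :=
      Finset.sum_le_sum_of_subset (f := fun j => g (n+1-j)) hsub
    have h12 : ∑ j ∈ ({1,2} : Finset ℕ), g (n+1-j) = g (n+1-1) + g (n+1-2) := by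
      rw [Finset.sum_pair (by omega)]
    have hp := aux_pos k hk g hinit hrec (n+1-2)
    have he : n + 1 - 1 = n := by omega
    rw [he] at h12
    omega

private lemma aux_key : ∀ n, k ≤ n + 1 →
    g (n+1) = g n + ∑ j ∈ Finset.Icc 2 k, g (n+1-j) := by
  intro n h
  rw [hrec (n+1) h]
  have hs : Finset.Icc 1 k = insert 1 (Finset.Icc 2 k) := by
    ext j; simp; omega
  rw [hs, Finset.sum_insert (by simp)]
  norm_num

private lemma aux_double : ∀ n, g (n+1) ≤ 2 * g n := by
  intro n
  induction n using Nat.strong_induction_on with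
  | _ n ih =>
    rcases lt_trichotomy (n+1) k with h | h | h
    · rw [hinit n (by omega), hinit (n+1) h, pow_succ]; omega
    · rw [hrec (n+1) (le_of_eq h.symm), hinit n (by omega)]
      have he : ∑ j ∈ Finset.Icc 1 k, g (n+1-j) = ∑ i ∈ Finset.range k, 2^i := by
        apply Finset.sum_nbij' (fun j => k - j) (fun i => k - i)
        · intro a ha; simp at ha ⊢; omega
        · intro a ha; simp at ha ⊢; omega
        · intro a ha; simp at ha; omega
        · intro a ha; simp at ha; omega
        · intro a ha
          simp at ha
          rw [hinit (n+1-a) (by omega)]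
          congr 1
          omega
      rw [he]
      have h1 := sum_two_pow_lt k
      have h2 : 2^k = 2 * 2^n := by rw [← pow_succ']; congr 1; omega
      omega
    · rw [hrec (n+1) (by omega), hrec n (by omega), Finset.mul_sum]
      apply Finset.sum_le_sum
      intro j hj
      simp [Finset.mem_Icc] at hj
      have he : n + 1 - j = (n - j) + 1 := by omega
      rw [he]
      exact ih (n - j) (by omega)

private lemma aux_main : ∀ x, 0 < x → ∃ S : Finset ℕ,
    (¬ ∃ a, ∀ j, j < k → a + j ∈ S) ∧ x = ∑ i ∈ S, g i ∧ ∀ i ∈ S, g i ≤ x := by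
  have hpos := aux_pos k hk g hinit hrec
  have hmono := aux_mono k hk g hinit hrec
  intro x
  induction x using Nat.strong_induction_on with
  | _ x ih =>
    intro hx
    set n := Nat.findGreatest (fun m => g m ≤ x) x with hn
    have hg0 : g 0 ≤ x := by rw [hinit 0 (by omega)]; simp; omega
    have hgn : g n ≤ x := by
      rw [hn]
      exact Nat.findGreatest_spec (P := fun m => g m ≤ x) (Nat.zero_le x) hg0
    have hlt : x < g (n+1) := by
      rcases le_or_gt (n+1) x with h | h
      · by_contra hc
        push_neg at hc
        exact Nat.findGreatest_is_greatest (P := fun m => g m ≤ x)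
          (by rw [← hn]; omega) h hc
      · have := hmono.le_apply (x := n+1)
        omega
    have hdou := aux_double k hk g hinit hrec n
    have hrlt : x - g n < g n := by omega
    rcases Nat.eq_zero_or_pos (x - g n) with h0 | h0
    · refine ⟨{n}, ?_, ?_, ?_⟩
      · rintro ⟨a, ha⟩
        have h1 := ha 0 (by omega)
        have h2 := ha 1 (by omega)
        simp at h1 h2
        omega
      · simp; omega
      · intro i hi; simp at hi; subst hi; exact hgn
    · obtain ⟨S', hS1, hS2, hS3⟩ := ih (x - g n) (by omega) h0
      have hSlt : ∀ i ∈ S', i < n := by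
        intro i hi
        have h1 := hS3 i hi
        have h2 : g i < g n := by omega
        exact hmono.lt_iff_lt.mp h2
      have hnS : n ∉ S' := fun h => absurd (hSlt n h) (lt_irrefl n)
      refine ⟨insert n S', ?_, ?_, ?_⟩
      · rintro ⟨a, ha⟩
        have hb : a + (k-1) ∈ insert n S' := ha (k-1) (by omega)
        have hble : a + (k-1) ≤ n := by
          rcases Finset.mem_insert.mp hb with h | h
          · omega
          · exact le_of_lt (hSlt _ h)
        rcases Nat.lt_or_ge (a + (k-1)) n with hc | hc
        · apply hS1
          refine ⟨a, fun j hj => ?_⟩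
          have hm : a + j ∈ insert n S' := ha j hj
          rcases Finset.mem_insert.mp hm with h | h
          · exfalso; omega
          · exact h
        · have hae : a + (k-1) = n := by omega
          have hkn : k ≤ n + 1 := by omega
          have hkey := aux_key k hk g hinit hrec n hkn
          have hrun : ∑ j ∈ Finset.Icc 2 k, g (n+1-j)
              = ∑ j ∈ Finset.range (k-1), g (a+j) := by
            apply Finset.sum_nbij' (fun j => k - j) (fun j => k - j)
            · intro b hb'; simp at hb' ⊢; omega
            · intro b hb'; simp at hb' ⊢; omega
            · intro b hb'; simp at hb'; omega
            · intro b hb'; simp at hb'; omega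
            · intro b hb'
              simp at hb'
              congr 1
              omega
          have himg : (Finset.range (k-1)).image (fun j => a + j) ⊆ S' := by
            intro i hi
            simp only [Finset.mem_image, Finset.mem_range] at hi
            obtain ⟨j, hj, rfl⟩ := hi
            have hm : a + j ∈ insert n S' := ha j (by omega)
            rcases Finset.mem_insert.mp hm with h | h
            · exfalso; omega
            · exact h
          have hsum1 : ∑ j ∈ Finset.range (k-1), g (a+j) ≤ ∑ i ∈ S', g i := by
            rw [← Finset.sum_image (f := g) (g := fun j => a + j)
              (fun p _ q _ h => by simpa using h)]
            exact Finset.sum_le_sum_of_subset himg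
          omega
      · rw [Finset.sum_insert hnS]; omega
      · intro i hi
        rcases Finset.mem_insert.mp hi with h | h
        · subst h; exact hgn
        · have := hS3 i h; omega

end

theorem kbonacci_zeckendorf_existence (k : ℕ) (hk : 2 ≤ k) (g : ℕ → ℕ)
    (hinit : ∀ i, i < k → g i = 2 ^ i)
    (hrec : ∀ n, k ≤ n → g n = ∑ j ∈ Finset.Icc 1 k, g (n - j)) :
    ∀ x : ℕ, 0 < x →
      ∃ S : Finset ℕ, (¬ ∃ a, ∀ j, j < k → a + j ∈ S) ∧ x = ∑ i ∈ S, g i := by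
  intro x hx
  obtain ⟨S, h1, h2, _⟩ := aux_main k hk g hinit hrec x hx
  exact ⟨S, h1, h2⟩
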